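/- Let A be a d×d real symmetric positive definite matrix and D a d×d real symmetric positive semidefinite matrix. If there exists ε > 0 such that D ⪯ εA, then A^{-1} D (A+D)^{-1} A (A+D)^{-1} D A^{-1} ⪯ (ε²/(1+ε)²) · A^{-1}. -/

import Mathlib

open Matrix
open scoped MatrixOrder

/-- Scalar inequality: `t ↦ t²/(1+t)²` is increasing on `[0, ∞)`. -/
private lemma scalar_key {ε l : ℝ} (hε : 0 < ε) (hl : 0 ≤ l) (hle : l ≤ ε) :
    0 ≤ ε ^ 2 / (1 + ε) ^ 2 - l * ((1 + l)⁻¹ * ((1 + l)⁻¹ * l)) := by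
  have h1 : (0:ℝ) < 1 + l := by linarith
  have h2 : (0:ℝ) < 1 + ε := by linarith
  have e : l * ((1 + l)⁻¹ * ((1 + l)⁻¹ * l)) = l ^ 2 / (1 + l) ^ 2 := by
    field_simp
  rw [sub_nonneg, e, div_le_div_iff₀ (by positivity) (by positivity)]
  have k1 : l * l ≤ ε * ε := mul_le_mul hle hle hl hε.le
  have k2 : l * (l * ε) ≤ ε * (l * ε) :=
    mul_le_mul_of_nonneg_right hle (mul_nonneg hl hε.le)
  nlinarith

/-- If `0 ⪯ Q ⪯ ε I` then `Q (I+Q)⁻¹ (I+Q)⁻¹ Q ⪯ (ε²/(1+ε)²) I`. -/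
private lemma middle_key {n : Type*} [Fintype n] [DecidableEq n]
    {Q : Matrix n n ℝ} (hQ : Q.PosSemidef) {ε : ℝ} (hε : 0 < ε)
    (hQε : (ε • (1 : Matrix n n ℝ) - Q).PosSemidef) :
    ((ε ^ 2 / (1 + ε) ^ 2) • (1 : Matrix n n ℝ)
      - Q * ((1 + Q)⁻¹ * ((1 + Q)⁻¹ * Q))).PosSemidef := by
  set U : Matrix n n ℝ := (hQ.1.eigenvectorUnitary : Matrix n n ℝ) with hU
  set lam := hQ.1.eigenvalues with hlam
  have hUU : star U * U = 1 :=
    (Matrix.mem_unitaryGroup_iff').mp hQ.1.eigenvectorUnitary.2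
  have hUU' : U * star U = 1 :=
    (Matrix.mem_unitaryGroup_iff).mp hQ.1.eigenvectorUnitary.2
  have hspec : Q = U * diagonal lam * star U := by
    have h := hQ.1.spectral_theorem
    simpa only [RCLike.ofReal_real_eq_id, Function.id_comp, Unitary.conjStarAlgAut_apply] using h
  have hmul : ∀ f g : n → ℝ, (U * diagonal f * star U) * (U * diagonal g * star U)
      = U * diagonal (fun i => f i * g i) * star U := by
    intro f g
    calc (U * diagonal f * star U) * (U * diagonal g * star U)
        = U * (diagonal f * ((star U * U) * diagonal g)) * star U := by
          simp only [Matrix.mul_assoc]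
      _ = U * diagonal (fun i => f i * g i) * star U := by
          rw [hUU, Matrix.one_mul, diagonal_mul_diagonal, Matrix.mul_assoc]
  have hone : (1 : Matrix n n ℝ) = U * diagonal (fun _ => (1:ℝ)) * star U := by
    rw [diagonal_one, Matrix.mul_one, hUU']
  have hlam0 : ∀ i, 0 ≤ lam i := fun i => hQ.eigenvalues_nonneg i
  have hlamε : ∀ i, lam i ≤ ε := by
    have hconj : (star U * (ε • (1 : Matrix n n ℝ) - Q) * (star U)ᴴ).PosSemidef :=
      hQε.mul_mul_conjTranspose_same (star U)
    have hcU : (star U)ᴴ = U := by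
      simp [Matrix.star_eq_conjTranspose]
    rw [hcU] at hconj
    have heq : star U * (ε • (1 : Matrix n n ℝ) - Q) * U
        = diagonal (fun i => ε - lam i) := by
      rw [Matrix.mul_sub, Matrix.sub_mul, hspec]
      have e1 : star U * (ε • (1 : Matrix n n ℝ)) * U = ε • (1 : Matrix n n ℝ) := by
        rw [Matrix.mul_smul, Matrix.mul_one, Matrix.smul_mul, hUU]
      have e2 : star U * (U * diagonal lam * star U) * U = diagonal lam := by
        calc star U * (U * diagonal lam * star U) * U
            = (star U * U) * diagonal lam * (star U * U) := by
              simp only [Matrix.mul_assoc]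
          _ = diagonal lam := by rw [hUU, Matrix.one_mul, Matrix.mul_one]
      rw [e1, e2, smul_one_eq_diagonal, diagonal_sub]
    rw [heq] at hconj
    intro i
    have := posSemidef_diagonal_iff.mp hconj i
    linarith
  have hv : ∀ i, (0:ℝ) < 1 + lam i := fun i => by have := hlam0 i; linarith
  have h1Q : (1 : Matrix n n ℝ) + Q = U * diagonal (fun i => 1 + lam i) * star U := by
    rw [hone, hspec, ← Matrix.add_mul, ← Matrix.mul_add, diagonal_add]
  have h1Qinv : ((1 : Matrix n n ℝ) + Q)⁻¹
      = U * diagonal (fun i => (1 + lam i)⁻¹) * star U := by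
    apply Matrix.inv_eq_right_inv
    rw [h1Q, hmul]
    have hfun : (fun i => (1 + lam i) * (1 + lam i)⁻¹) = fun _ => (1:ℝ) := by
      funext i; exact mul_inv_cancel₀ (hv i).ne'
    rw [hfun, ← hone]
  have hmid : (ε ^ 2 / (1 + ε) ^ 2) • (1 : Matrix n n ℝ)
      - Q * ((1 + Q)⁻¹ * ((1 + Q)⁻¹ * Q))
      = U * diagonal (fun i => ε ^ 2 / (1 + ε) ^ 2
          - lam i * ((1 + lam i)⁻¹ * ((1 + lam i)⁻¹ * lam i))) * star U := by
    have e3 : Q * ((1 + Q)⁻¹ * ((1 + Q)⁻¹ * Q))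
        = U * diagonal (fun i => lam i * ((1 + lam i)⁻¹ * ((1 + lam i)⁻¹ * lam i)))
          * star U := by
      rw [h1Qinv, hspec]
      simp only [hmul]
    have e4 : (ε ^ 2 / (1 + ε) ^ 2) • (1 : Matrix n n ℝ)
        = U * diagonal (fun _ => ε ^ 2 / (1 + ε) ^ 2) * star U := by
      have e5 : U * diagonal (fun _ : n => ε ^ 2 / (1 + ε) ^ 2) * star U
          = (ε ^ 2 / (1 + ε) ^ 2) • (U * (1 : Matrix n n ℝ) * star U) := by
        rw [← smul_one_eq_diagonal, Matrix.mul_smul, Matrix.smul_mul]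
      rw [e5, Matrix.mul_one, hUU']
    rw [e3, e4, ← Matrix.sub_mul, ← Matrix.mul_sub, diagonal_sub]
  rw [hmid]
  have hdiag : (diagonal (fun i => ε ^ 2 / (1 + ε) ^ 2
      - lam i * ((1 + lam i)⁻¹ * ((1 + lam i)⁻¹ * lam i)))).PosSemidef :=
    posSemidef_diagonal_iff.mpr fun i => scalar_key hε (hlam0 i) (hlamε i)
  have := hdiag.mul_mul_conjTranspose_same U
  simpa [Matrix.star_eq_conjTranspose] using this

/-- If `D ⪯ εA` (Loewner order) with `A` positive definite and `D` positive semidefinite, then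
`A⁻¹ D (A+D)⁻¹ A (A+D)⁻¹ D A⁻¹ ⪯ (ε²/(1+ε)²) A⁻¹`. -/
theorem quantization_error_upper_multiplicative {d : ℕ}
    (A D : Matrix (Fin d) (Fin d) ℝ) (hA : A.PosDef) (hD : D.PosSemidef)
    (ε : ℝ) (hε : 0 < ε) (hDA : (ε • A - D).PosSemidef) :
    ((ε ^ 2 / (1 + ε) ^ 2) • A⁻¹
      - A⁻¹ * D * (A + D)⁻¹ * A * (A + D)⁻¹ * D * A⁻¹).PosSemidef := by
  have hAi : (A⁻¹).PosDef := hA.inv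
  set S : Matrix (Fin d) (Fin d) ℝ := CFC.sqrt (A⁻¹) with hSdef
  have hS : S.PosSemidef := (CFC.sqrt_nonneg _).posSemidef
  have hSH : Sᴴ = S := hS.1
  have hSS : S * S = A⁻¹ := CFC.sqrt_mul_sqrt_self _ hAi.posSemidef.nonneg
  have hdS : IsUnit S.det := by
    have hdet : S.det * S.det = (A⁻¹).det := by rw [← det_mul, hSS]
    have hpos : 0 < (A⁻¹).det := hAi.det_pos
    have hne : S.det ≠ 0 := by
      intro h; rw [h, mul_zero] at hdet; exact hpos.ne' hdet.symm
    exact hne.isUnit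
  have hS1 : S * S⁻¹ = 1 := mul_nonsing_inv S hdS
  have hS2 : S⁻¹ * S = 1 := nonsing_inv_mul S hdS
  have hS1' : ∀ X : Matrix (Fin d) (Fin d) ℝ, S * (S⁻¹ * X) = X := fun X => by
    rw [← Matrix.mul_assoc, hS1, Matrix.one_mul]
  have hS2' : ∀ X : Matrix (Fin d) (Fin d) ℝ, S⁻¹ * (S * X) = X := fun X => by
    rw [← Matrix.mul_assoc, hS2, Matrix.one_mul]
  have hAeq : A = S⁻¹ * S⁻¹ := by
    have h1 : A⁻¹⁻¹ = A :=
      Matrix.nonsing_inv_nonsing_inv A ((Matrix.isUnit_iff_isUnit_det A).mp hA.isUnit)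
    rw [← h1, ← hSS, Matrix.mul_inv_rev]
  have hQ : (S * D * S).PosSemidef := by
    have := hD.mul_mul_conjTranspose_same S
    rwa [hSH] at this
  have hSAS : S * A * S = 1 := by
    rw [hAeq]
    calc S * (S⁻¹ * S⁻¹) * S = (S * S⁻¹) * (S⁻¹ * S) := by simp only [Matrix.mul_assoc]
      _ = 1 := by rw [hS1, hS2, Matrix.one_mul]
  have hQε : (ε • (1 : Matrix (Fin d) (Fin d) ℝ) - S * D * S).PosSemidef := by
    have h := hDA.mul_mul_conjTranspose_same S
    rw [hSH] at h
    have heq : S * (ε • A - D) * S = ε • (1 : Matrix (Fin d) (Fin d) ℝ) - S * D * S := by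
      rw [Matrix.mul_sub, Matrix.sub_mul, Matrix.mul_smul, Matrix.smul_mul, hSAS]
    rwa [heq] at h
  have h1Qpd : ((1 : Matrix (Fin d) (Fin d) ℝ) + S * D * S).PosDef :=
    Matrix.PosDef.one.add_posSemidef hQ
  have hinv1Q : (1 + S * D * S) * (1 + S * D * S)⁻¹ = 1 :=
    mul_nonsing_inv _ ((Matrix.isUnit_iff_isUnit_det _).mp h1Qpd.isUnit)
  have hinv1Q' : ∀ X : Matrix (Fin d) (Fin d) ℝ,
      (1 + S * D * S) * ((1 + S * D * S)⁻¹ * X) = X := fun X => by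
    rw [← Matrix.mul_assoc, hinv1Q, Matrix.one_mul]
  have hADeq : A + D = S⁻¹ * ((1 + S * D * S) * S⁻¹) := by
    rw [hAeq]
    simp only [Matrix.mul_add, Matrix.add_mul, Matrix.one_mul, Matrix.mul_one,
      Matrix.mul_assoc, hS1, hS2, hS1', hS2']
  have hinv1Q'' := hinv1Q'
  simp only [Matrix.mul_assoc] at hinv1Q''
  have hADinv : (A + D)⁻¹ = S * ((1 + S * D * S)⁻¹ * S) := by
    apply Matrix.inv_eq_right_inv
    rw [hADeq]
    simp only [Matrix.mul_assoc, hS2', hinv1Q'', hS2]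
  have key : (ε ^ 2 / (1 + ε) ^ 2) • A⁻¹
      - A⁻¹ * D * (A + D)⁻¹ * A * (A + D)⁻¹ * D * A⁻¹
      = S * ((ε ^ 2 / (1 + ε) ^ 2) • (1 : Matrix (Fin d) (Fin d) ℝ)
          - (S * D * S) * ((1 + S * D * S)⁻¹ * ((1 + S * D * S)⁻¹ * (S * D * S)))) * S := by
    rw [hADinv, show A⁻¹ = S * S from hSS.symm, hAeq]
    simp only [Matrix.mul_sub, Matrix.sub_mul, Matrix.mul_smul, Matrix.smul_mul,
      Matrix.mul_one, Matrix.one_mul, Matrix.mul_assoc, hS1, hS2, hS1', hS2']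
  rw [key]
  have hmid := middle_key hQ hε hQε
  have hfin := hmid.mul_mul_conjTranspose_same S
  rwa [hSH] at hfin
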